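/- Let V be a maximal isotropic subspace with respect to ω, let ψ₀ be a stabilizer state for V, and let ψ_j = σ(c,d).mulVec ψ₀ be a basis codeword obtained by applying the codeword spinor σ(c,d). Then for every (a,b) ∈ V, ψ_j is an eigenvector of σ(a,b): σ(a,b).mulVec ψ_j = (-1)^(ω((a,b),(c,d))) • ψ_j, with eigenvalue ±1. (Paper's Lemma 5: each basis codeword is an eigenvector of every spinor in the Cartanion with eigenvalue (-1)^ε.) -/
import Mathlib


open Matrix BigOperators

/-- The mod-2 dot product of two bitstrings. -/
def dotp {p : ℕ} (a b : Fin p → ZMod 2) : ZMod 2 := ∑ i, a i * b i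

/-- The sign `(-1)^t` for `t : ZMod 2`. -/
noncomputable def sgn (t : ZMod 2) : ℂ := (-1 : ℂ) ^ t.val

/-- The Pauli spinor matrix `σ(a,b)`, representing `⊗ᵢ X^(a i) Z^(b i)`:
`σ(a,b) x y = (-1)^(b⬝x)` if `y = x + a` and `0` otherwise. -/
noncomputable def pauli {p : ℕ} (a b : Fin p → ZMod 2) :
    Matrix (Fin p → ZMod 2) (Fin p → ZMod 2) ℂ :=
  fun x y => if y = x + a then sgn (dotp b x) else 0

/-- The symplectic form `ω((a,b),(c,d)) = a⬝d + b⬝c` on pairs of bitstrings. -/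
def omegaF {p : ℕ} (u v : (Fin p → ZMod 2) × (Fin p → ZMod 2)) : ZMod 2 :=
  dotp u.1 v.2 + dotp u.2 v.1

/-- A subspace is isotropic if `ω` vanishes on all pairs of its elements. -/
def IsIsotropic {p : ℕ}
    (V : Submodule (ZMod 2) ((Fin p → ZMod 2) × (Fin p → ZMod 2))) : Prop :=
  ∀ u ∈ V, ∀ v ∈ V, omegaF u v = 0

/-- A maximal isotropic subspace: isotropic and not properly contained in any
isotropic subspace. -/
def IsMaxIsotropic {p : ℕ}
    (V : Submodule (ZMod 2) ((Fin p → ZMod 2) × (Fin p → ZMod 2))) : Prop :=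
  IsIsotropic V ∧ ∀ W, IsIsotropic W → V ≤ W → W = V

lemma zmod2_cases (t : ZMod 2) : t = 0 ∨ t = 1 := by revert t; decide

lemma sgn_zero : sgn 0 = 1 := by simp [sgn]

lemma sgn_one : sgn (1 : ZMod 2) = -1 := by
  simp [sgn, ZMod.val_one]

lemma sgn_add (s t : ZMod 2) : sgn (s + t) = sgn s * sgn t := by
  rcases zmod2_cases s with hs | hs <;> rcases zmod2_cases t with ht | ht <;>
      subst hs <;> subst ht <;>
    simp [sgn_zero, sgn_one, show (1 + 1 : ZMod 2) = 0 from by decide]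

lemma sgn_sq (t : ZMod 2) : sgn t * sgn t = 1 := by
  rcases zmod2_cases t with h | h <;> subst h <;> simp [sgn_zero, sgn_one]

lemma dotp_add_right {p : ℕ} (b x a : Fin p → ZMod 2) :
    dotp b (x + a) = dotp b x + dotp b a := by
  simp [dotp, mul_add, Finset.sum_add_distrib]

lemma dotp_comm {p : ℕ} (a b : Fin p → ZMod 2) : dotp a b = dotp b a := by
  simp [dotp, mul_comm]

lemma pauli_comm {p : ℕ} (a b c d : Fin p → ZMod 2) :
    pauli a b * pauli c d = sgn (dotp a d + dotp b c) • (pauli c d * pauli a b) := by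
  ext x y
  rw [Matrix.smul_apply, Matrix.mul_apply, Matrix.mul_apply]
  rw [Finset.sum_eq_single (x + a) (by intro z _ hz; simp [pauli, hz, if_neg (Ne.symm hz)])
    (by intro h; exact absurd (Finset.mem_univ _) h)]
  rw [Finset.sum_eq_single (x + c) (by intro z _ hz; simp [pauli, hz, if_neg (Ne.symm hz)])
    (by intro h; exact absurd (Finset.mem_univ _) h)]
  simp only [pauli, if_pos rfl]
  by_cases hy : y = x + a + c
  · have hy' : y = x + c + a := by rw [hy]; ring
    simp only [if_pos hy, if_pos hy', dotp_add_right, sgn_add, smul_eq_mul]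
    rw [dotp_comm d a]
    calc sgn (dotp b x) * (sgn (dotp d x) * sgn (dotp a d))
        = sgn (dotp a d) * sgn (dotp d x) * sgn (dotp b x) * 1 := by ring
      _ = sgn (dotp a d) * sgn (dotp d x) * sgn (dotp b x) * (sgn (dotp b c) * sgn (dotp b c)) := by
          rw [sgn_sq]
      _ = sgn (dotp a d) * sgn (dotp b c) * (sgn (dotp d x) * (sgn (dotp b x) * sgn (dotp b c))) := by
          ring
  · have hy' : ¬ y = x + c + a := fun h => hy (by rw [h]; ring)
    rw [if_neg hy, if_neg hy']
    simp

/-- Paper's Lemma 5: For a stabilizer state `ψ₀` of a maximal isotropic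
subspace `V` and a basis codeword `ψ_j = σ(c,d).mulVec ψ₀`, each `(a,b) ∈ V` has `ψ_j`
as an eigenvector: `σ(a,b).mulVec ψ_j = (-1)^(ω((a,b),(c,d))) • ψ_j`, eigenvalue `±1`. -/
theorem codeword_eigenvector {p : ℕ} (hp : 1 ≤ p)
    (V : Submodule (ZMod 2) ((Fin p → ZMod 2) × (Fin p → ZMod 2)))
    (hV : IsMaxIsotropic V) (ψ₀ : (Fin p → ZMod 2) → ℂ) (hψ₀ : ψ₀ ≠ 0)
    (hstab : ∀ u ∈ V, (pauli u.1 u.2).mulVec ψ₀ = ψ₀)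
    (c d : Fin p → ZMod 2) :
    ∀ u ∈ V,
      (pauli u.1 u.2).mulVec ((pauli c d).mulVec ψ₀) =
        sgn (omegaF u (c, d)) • (pauli c d).mulVec ψ₀ := by
  rintro ⟨a, b⟩ hu
  rw [Matrix.mulVec_mulVec, pauli_comm, Matrix.smul_mulVec,
    ← Matrix.mulVec_mulVec, hstab _ hu]
  rfl
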